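/- (Lemma 4(ii): the secondary root γ3 and slope s3.) Under the stated assumptions, κ1(−γ2) < 0 and: (a) if κ1′(−γ2) > 0 (so s2 = 0), then there exists a unique γ3 ∈ (γ2, γ1) with κ1(−γ3) = κ1(−γ2), and this γ3 satisfies κ1′(−γ3) < 0 and κ2′(−γ3) < 0, so that s3 := κ1′(−γ3)/κ2′(−γ3) > 0; (b) if κ1′(−γ2) < 0, then for every s ∈ (γ2, γ1] one has κ1(−s) > κ1(−γ2), i.e. γ2 itself is the largest root in (0, γ1] of κ1(−s) = κ1(−γ2). -/

import Mathlib

open Set Filter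


/-- Lemma 4(ii): the secondary root `γ3` and slope `s3`.  One has `κ1(-γ2) < 0`;
if `κ1'(-γ2) > 0` there is a unique `γ3 ∈ (γ2, γ1)` with `κ1(-γ3) = κ1(-γ2)`,
and it satisfies `κ1'(-γ3) < 0`, `κ2'(-γ3) < 0` and `s3 > 0`;
if `κ1'(-γ2) < 0` then `κ1(-s) > κ1(-γ2)` for all `s ∈ (γ2, γ1]`. -/
theorem secondary_root_gamma3
    (p1 p2 : ℝ) (hp : p2 < p1)
    (κ1 κ2 : ℝ → ℝ)
    (hκ2conv : StrictConvexOn ℝ Set.univ κ2) (hκ2diff : Differentiable ℝ κ2)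
    (hκ1 : ∀ θ, κ1 θ = κ2 θ + (p1 - p2) * θ)
    (hκ2zero : κ2 0 = 0)
    (γ1 γ2 : ℝ) (hγ2pos : 0 < γ2) (hγ : γ2 < γ1)
    (hγ1root : κ1 (-γ1) = 0) (hγ2root : κ2 (-γ2) = 0) :
    κ1 (-γ2) < 0 ∧
    (0 < deriv κ1 (-γ2) →
      (∃! γ3, γ3 ∈ Set.Ioo γ2 γ1 ∧ κ1 (-γ3) = κ1 (-γ2)) ∧
      (∀ γ3, γ3 ∈ Set.Ioo γ2 γ1 → κ1 (-γ3) = κ1 (-γ2) →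
        deriv κ1 (-γ3) < 0 ∧ deriv κ2 (-γ3) < 0 ∧
        0 < deriv κ1 (-γ3) / deriv κ2 (-γ3))) ∧
    (deriv κ1 (-γ2) < 0 →
      ∀ s ∈ Set.Ioc γ2 γ1, κ1 (-γ2) < κ1 (-s)) := by
  have hc : 0 < p1 - p2 := sub_pos.2 hp
  have hEq : κ1 = fun θ => κ2 θ + (p1 - p2) * θ := funext hκ1
  have hκ1diff : Differentiable ℝ κ1 := by
    rw [hEq]; exact hκ2diff.add (differentiable_id.const_mul _)
  have hderiv : ∀ θ, deriv κ1 θ = deriv κ2 θ + (p1 - p2) := by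
    intro θ
    have h2 : HasDerivAt (fun θ : ℝ => (p1 - p2) * θ) (p1 - p2) θ := by
      simpa using (hasDerivAt_id θ).const_mul (p1 - p2)
    have h := ((hκ2diff θ).hasDerivAt).add h2
    rw [hEq]; exact h.deriv
  have hκ1conv : StrictConvexOn ℝ Set.univ κ1 := by
    have h2 : ConvexOn ℝ Set.univ (fun θ : ℝ => (p1 - p2) * θ) := by
      exact (convexOn_id (convex_univ)).smul (le_of_lt hc)
    rw [hEq]
    exact hκ2conv.add_convexOn h2
  -- κ1(-γ2) < 0
  have hA : κ1 (-γ2) < 0 := by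
    rw [hκ1, hγ2root]; nlinarith
  -- helper: slope zero between equal values
  have hslope0 : ∀ x y : ℝ, κ1 x = κ1 y → slope κ1 x y = 0 := by
    intro x y h
    rw [slope_def_field, h, sub_self, zero_div]
  refine ⟨hA, ?_, ?_⟩
  · intro hpos
    -- find θ ∈ (-γ1, -γ2) with κ1 θ < κ1 (-γ2)
    have hex : ∃ θ ∈ Set.Ioo (-γ1) (-γ2), κ1 θ < κ1 (-γ2) := by
      have hd := (hκ1diff (-γ2)).hasDerivAt
      rw [hasDerivAt_iff_tendsto_slope] at hd
      have hd' : Tendsto (slope κ1 (-γ2)) (nhdsWithin (-γ2) (Iio (-γ2)))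
          (nhds (deriv κ1 (-γ2))) :=
        hd.mono_left (nhdsWithin_mono _ (fun x hx => ne_of_lt hx))
      have hev : ∀ᶠ θ in nhdsWithin (-γ2) (Iio (-γ2)), 0 < slope κ1 (-γ2) θ :=
        hd'.eventually (eventually_gt_nhds hpos)
      have hmem : Set.Ioo (-γ1) (-γ2) ∈ nhdsWithin (-γ2) (Iio (-γ2)) :=
        Ioo_mem_nhdsLT (by linarith)
      obtain ⟨θ, hsl, hθ⟩ := (hev.and (eventually_of_mem hmem (fun x hx => hx))).exists
      refine ⟨θ, hθ, ?_⟩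
      rw [slope_def_field] at hsl
      rcases div_pos_iff.1 hsl with ⟨hn, hd⟩ | ⟨hn, hd⟩
      · linarith [hθ.2]
      · linarith
    obtain ⟨θ, hθmem, hθlt⟩ := hex
    -- IVT on [-γ1, θ]
    have hcont : ContinuousOn κ1 (Icc (-γ1) θ) := hκ1diff.continuous.continuousOn
    have hsub := intermediate_value_Ioo' (le_of_lt hθmem.1) hcont
    have hmemIoo : κ1 (-γ2) ∈ Ioo (κ1 θ) (κ1 (-γ1)) := by
      rw [hγ1root]; exact ⟨hθlt, hA⟩
    obtain ⟨θ3, hθ3mem, hθ3val⟩ := hsub hmemIoo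
    -- uniqueness lemma
    have huniq : ∀ a b : ℝ, a ∈ Set.Ioo γ2 γ1 → κ1 (-a) = κ1 (-γ2) →
        b ∈ Set.Ioo γ2 γ1 → κ1 (-b) = κ1 (-γ2) → a < b → False := by
      intro a b ha hva hb hvb hab
      have h1 : slope κ1 (-b) (-a) < deriv κ1 (-a) :=
        hκ1conv.slope_lt_deriv (mem_univ _) (mem_univ _) (by linarith) (hκ1diff _)
      have h2 : deriv κ1 (-a) < slope κ1 (-a) (-γ2) :=
        hκ1conv.deriv_lt_slope (mem_univ _) (mem_univ _) (by linarith [ha.1]) (hκ1diff _)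
      have e1 : slope κ1 (-b) (-a) = 0 := hslope0 _ _ (hvb.trans hva.symm)
      have e2 : slope κ1 (-a) (-γ2) = 0 := hslope0 _ _ hva
      rw [e1] at h1; rw [e2] at h2; linarith
    constructor
    · refine ⟨-θ3, ⟨⟨by linarith [hθ3mem.2, hθmem.2], by linarith [hθ3mem.1]⟩,
        by rw [neg_neg]; exact hθ3val⟩, ?_⟩
      intro y hy
      rcases lt_trichotomy y (-θ3) with h | h | h
      · exact absurd (huniq y (-θ3) hy.1 hy.2
          ⟨by linarith [hθ3mem.2, hθmem.2], by linarith [hθ3mem.1]⟩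
          (by rw [neg_neg]; exact hθ3val) h) (fun x => x)
      · exact h
      · exact absurd (huniq (-θ3)  y
          ⟨by linarith [hθ3mem.2, hθmem.2], by linarith [hθ3mem.1]⟩
          (by rw [neg_neg]; exact hθ3val) hy.1 hy.2 h) (fun x => x)
    · intro γ3 hγ3 hv
      have h2 : deriv κ1 (-γ3) < slope κ1 (-γ3) (-γ2) :=
        hκ1conv.deriv_lt_slope (mem_univ _) (mem_univ _) (by linarith [hγ3.1]) (hκ1diff _)
      rw [hslope0 _ _ hv] at h2
      have h3 : deriv κ2 (-γ3) < 0 := by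
        have := hderiv (-γ3); linarith
      exact ⟨h2, h3, div_pos_of_neg_of_neg h2 h3⟩
  · intro hneg s hs
    have h1 : slope κ1 (-s) (-γ2) < deriv κ1 (-γ2) :=
      hκ1conv.slope_lt_deriv (mem_univ _) (mem_univ _) (by linarith [hs.1]) (hκ1diff _)
    rw [slope_def_field] at h1
    have h1' : (κ1 (-γ2) - κ1 (-s)) / (-γ2 - -s) < 0 := lt_trans h1 hneg
    rcases div_neg_iff.1 h1' with ⟨hn, hd⟩ | ⟨hn, hd⟩
    · linarith [hs.1]
    · linarith
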